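/- For an element y of the coweight-type lattice Y with (y,α) ≥ 0 for all positive roots α, the length of the translation t_y in the extended affine Weyl group, defined as l(t_y) = #(R̂⁺ ∩ t_y⁻¹ R̂⁻), equals 2(ρ, y) where ρ is the half-sum of positive roots; more generally, for arbitrary y ∈ Y, l(t_y) = Σ_{α ∈ R⁺} |(y,α)|. -/
import Mathlib


open scoped RealInnerProductSpace

/- Affine roots α + mc (α ∈ R, m ∈ ℤ) are modeled as pairs `(α, m) : V × ℤ`.
An affine root (α, m) is positive iff m > 0, or m = 0 and α ∈ R⁺; it is negative otherwise.
The translation t_y sends α + mc to α + (m - (y,α))c, so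
t_y⁻¹ R̂⁻ ∩ R̂⁺ = {(α,m) positive : (α, m - (y,α)) negative}. -/

/-- for y in a lattice with (y,α) ∈ ℤ for all roots α, the length
l(t_y) = #(R̂⁺ ∩ t_y⁻¹R̂⁻) equals Σ_{α∈R⁺} |(y,α)|, and if (y,α) ≥ 0 for all α ∈ R⁺
it equals 2(ρ,y) where ρ = (1/2)Σ_{α∈R⁺} α. -/
theorem stmt4 {V : Type*} [NormedAddCommGroup V] [InnerProductSpace ℝ V]
    (R Rplus : Finset V)
    (hR : ∀ α : V, α ∈ R ↔ (α ∈ Rplus ∨ -α ∈ Rplus))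
    (hdisj : ∀ α ∈ Rplus, -α ∉ Rplus)
    (h0 : (0 : V) ∉ R)
    (y : V) (zmap : V → ℤ) (hz : ∀ α ∈ R, (zmap α : ℝ) = ⟪y, α⟫)
    (S : Set (V × ℤ))
    (hS : S = {p : V × ℤ | p.1 ∈ R ∧
        (0 < p.2 ∨ (p.2 = 0 ∧ p.1 ∈ Rplus)) ∧
        (p.2 - zmap p.1 < 0 ∨ (p.2 - zmap p.1 = 0 ∧ p.1 ∉ Rplus))}) :
    S.Finite ∧
    ((Nat.card S : ℝ) = ∑ α ∈ Rplus, |⟪y, α⟫|) ∧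
    ((∀ α ∈ Rplus, 0 ≤ ⟪y, α⟫) →
      (Nat.card S : ℝ) = 2 * ⟪(2 : ℝ)⁻¹ • ∑ α ∈ Rplus, α, y⟫) := by
  classical
  set l : V → ℤ := fun α => if α ∈ Rplus then 0 else 1 with hl
  set u : V → ℤ := fun α => if α ∈ Rplus then zmap α else zmap α + 1 with hu
  set F : Finset (V × ℤ) :=
    R.biUnion (fun α => (Finset.Ico (l α) (u α)).image fun m => (α, m)) with hF
  have hSF : S = ↑F := by
    ext ⟨α, m⟩
    simp only [hS, Set.mem_setOf_eq, hF, Finset.coe_biUnion, Set.mem_iUnion,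
      Finset.mem_coe, Finset.mem_image, Finset.mem_Ico, Prod.mk.injEq]
    constructor
    · rintro ⟨hαR, hpos, hneg⟩
      refine ⟨α, hαR, m, ?_, rfl, rfl⟩
      by_cases hp : α ∈ Rplus
      · simp only [hl, hu, if_pos hp]
        constructor
        · rcases hpos with h | ⟨h, _⟩ <;> omega
        · rcases hneg with h | ⟨_, h2⟩
          · omega
          · exact absurd hp h2
      · simp only [hl, hu, if_neg hp]
        constructor
        · rcases hpos with h | ⟨_, h2⟩
          · omega
          · exact absurd h2 hp
        · rcases hneg with h | ⟨h, _⟩ <;> omega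
    · rintro ⟨β, hβR, m', hm', rfl, rfl⟩
      by_cases hp : β ∈ Rplus
      · simp only [hl, hu, if_pos hp] at hm'
        refine ⟨hβR, ?_, Or.inl (by omega)⟩
        rcases eq_or_lt_of_le hm'.1 with h | h
        · exact Or.inr ⟨h.symm, hp⟩
        · exact Or.inl h
      · simp only [hl, hu, if_neg hp] at hm'
        refine ⟨hβR, Or.inl (by omega), ?_⟩
        rcases lt_or_eq_of_le (show m' ≤ zmap β by omega) with h | h
        · exact Or.inl (by omega)
        · exact Or.inr ⟨by omega, hp⟩
  have hfin : S.Finite := hSF ▸ F.finite_toSet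
  have hcard : Nat.card S = F.card := by
    rw [hSF]; exact Nat.card_eq_finsetCard F
  -- compute F.card
  have hFcard : F.card = ∑ α ∈ R, (u α - l α).toNat := by
    rw [hF, Finset.card_biUnion]
    · refine Finset.sum_congr rfl fun α _ => ?_
      rw [Finset.card_image_of_injective _ (fun a b h => (Prod.mk.injEq _ _ _ _ ▸ h).2),
        Int.card_Ico]
    · intro a ha b hb hab
      simp only [Finset.disjoint_left, Finset.mem_image]
      rintro p ⟨m1, _, rfl⟩ ⟨m2, _, h⟩
      exact hab (Prod.mk.injEq _ _ _ _ ▸ h).1.symm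
  -- split R
  have hRplus_sub : ∀ α ∈ Rplus, α ∈ R := fun α hα => (hR α).2 (Or.inl hα)
  have hRsplit : R = Rplus ∪ Rplus.image (fun a => -a) := by
    ext α
    simp only [Finset.mem_union, Finset.mem_image, hR α]
    constructor
    · rintro (h | h)
      · exact Or.inl h
      · exact Or.inr ⟨-α, h, neg_neg α⟩
    · rintro (h | ⟨b, hb, rfl⟩)
      · exact Or.inl h
      · exact Or.inr (by rwa [neg_neg])
  have hzneg : ∀ α ∈ Rplus, zmap (-α) = -zmap α := by
    intro α hα
    have h1 : (-α) ∈ R := (hR _).2 (Or.inr (by rwa [neg_neg]))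
    have e1 := hz _ h1
    have e2 := hz _ (hRplus_sub α hα)
    rw [inner_neg_right, ← e2] at e1
    exact_mod_cast e1
  have hsum : ∑ α ∈ R, (u α - l α).toNat
      = ∑ α ∈ Rplus, ((zmap α).toNat + (-(zmap α)).toNat) := by
    rw [hRsplit, Finset.sum_union, Finset.sum_image (fun a _ b _ h => neg_injective h),
      ← Finset.sum_add_distrib]
    · refine Finset.sum_congr rfl fun α hα => ?_
      have hn : -α ∉ Rplus := hdisj α hα
      simp only [hl, hu, if_pos hα, if_neg hn, hzneg α hα]
      omega
    · simp only [Finset.disjoint_left, Finset.mem_image]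
      rintro a ha ⟨b, hb, rfl⟩
      exact hdisj b hb ha
  have key : (Nat.card S : ℝ) = ∑ α ∈ Rplus, |⟪y, α⟫| := by
    rw [hcard, hFcard, hsum, Nat.cast_sum]
    refine Finset.sum_congr rfl fun α hα => ?_
    rw [Int.toNat_add_toNat_neg_eq_natAbs, Nat.cast_natAbs, Int.cast_abs, hz _ (hRplus_sub α hα)]
  refine ⟨hfin, key, fun hnn => ?_⟩
  rw [key, real_inner_smul_left, sum_inner]
  rw [Finset.sum_congr rfl fun α hα => abs_of_nonneg (hnn α hα)]
  rw [Finset.sum_congr rfl fun α (_ : α ∈ Rplus) => real_inner_comm α y]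
  ring
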